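/- In a graph where each vertex of a set U of size m has its radius-k' ball pairwise disjoint from the balls of the other vertices of U, color vertices independently blue with probability 1/4. If each ball N_{k'}(u) has at most t vertices and m·(1/4)^t → ∞, then with probability tending to 1 some u ∈ U has its entire ball N_{k'}(u) colored blue; consequently, u remains blue through generation k' of majority dynamics. -/

import Mathlib

open Finset Filter

set_option maxRecDepth 8000

/-- One synchronous step of majority dynamics: a vertex adopts the strictly most
frequent color among its neighbors, keeping its current color in case of a tie.
Colors are `Bool`, with `true` = blue. -/
def majStep {V : Type*} [Fintype V] [DecidableEq V] (G : SimpleGraph V)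
    [DecidableRel G.Adj] (g : V → Bool) : V → Bool := fun v =>
  let b := ((G.neighborFinset v).filter (fun w => g w = true)).card
  let r := ((G.neighborFinset v).filter (fun w => g w = false)).card
  if r < b then true else if b < r then false else g v

/-- The ball of radius `r` around `v`: vertices joined to `v` by a walk of length
at most `r`. -/
def gball {V : Type*} (G : SimpleGraph V) (v : V) (r : ℕ) : Set V :=
  {u | ∃ p : G.Walk v u, p.length ≤ r}

lemma blue_persists {V : Type*} [Fintype V] [DecidableEq V] (G : SimpleGraph V)
    [DecidableRel G.Adj] (u : V) (r : ℕ) (g : ℕ → V → Bool)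
    (hg : ∀ s, g (s + 1) = majStep G (g s))
    (h0 : ∀ w ∈ gball G u r, g 0 w = true) :
    ∀ i, i ≤ r → ∀ w ∈ gball G u (r - i), g i w = true := by
  intro i
  induction i with
  | zero => simpa using h0
  | succ i ih =>
    intro hir w hw
    obtain ⟨p, hp⟩ := hw
    have hi : i ≤ r := Nat.le_of_succ_le hir
    have hwball : w ∈ gball G u (r - i) := ⟨p, by omega⟩
    have hself : g i w = true := ih hi w hwball
    have hnb : ∀ x ∈ G.neighborFinset w, g i x = true := by
      intro x hx
      rw [SimpleGraph.mem_neighborFinset] at hx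
      exact ih hi x ⟨p.concat hx, by rw [SimpleGraph.Walk.length_concat]; omega⟩
    rw [hg i]
    unfold majStep
    simp only
    rw [Finset.filter_true_of_mem hnb,
      Finset.filter_false_of_mem (by intro x hx; simp [hnb x hx])]
    simp only [Finset.card_empty]
    rcases Nat.eq_zero_or_pos (G.neighborFinset w).card with h | h
    · simp [h, hself]
    · exact if_pos h

lemma prod_neg'' {ι : Type*} (s : Finset ι) (f : ι → ℝ) :
    ∏ i ∈ s, (-f i) = (-1:ℝ)^s.card * ∏ i ∈ s, f i := by
  induction s using Finset.cons_induction with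
  | empty => simp
  | cons a s ha ih => rw [Finset.prod_cons, Finset.prod_cons, ih, Finset.card_cons, pow_succ]; ring

lemma sum_weight_subset {V : Type*} [Fintype V] [DecidableEq V] (S : Finset V) :
    ∑ c : V → Bool, (∏ v ∈ S, (if c v then (1:ℝ) else 0)) *
      ∏ v : V, (if c v then (1/4 : ℝ) else 3/4) = (1/4 : ℝ) ^ S.card := by
  have h1 : ∀ c : V → Bool,
      (∏ v ∈ S, (if c v then (1:ℝ) else 0)) * ∏ v : V, (if c v then (1/4 : ℝ) else 3/4)
      = ∏ v : V, ((if v ∈ S then (if c v then (1:ℝ) else 0) else 1) *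
          (if c v then (1/4 : ℝ) else 3/4)) := by
    intro c
    rw [Finset.prod_mul_distrib]
    congr 1
    rw [← Finset.prod_filter]
    congr 1
    simp [Finset.filter_mem_eq_inter]
  simp_rw [h1]
  have h2 : (Finset.univ : Finset (V → Bool)) = Fintype.piFinset (fun _ : V => (Finset.univ : Finset Bool)) :=
    Fintype.piFinset_univ.symm
  rw [h2, ← Finset.prod_univ_sum (t := fun _ : V => (Finset.univ : Finset Bool))
    (f := fun v b => (if v ∈ S then (if b then (1:ℝ) else 0) else 1) *
      (if b then (1/4 : ℝ) else 3/4))]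
  have h3 : ∀ v : V, (∑ b : Bool, ((if v ∈ S then (if b then (1:ℝ) else 0) else 1) *
      (if b then (1/4 : ℝ) else 3/4))) = if v ∈ S then (1/4:ℝ) else 1 := by
    intro v
    by_cases hv : v ∈ S <;> simp [hv]; norm_num
  simp_rw [h3]
  rw [Finset.prod_ite_mem, Finset.univ_inter, Finset.prod_const]

lemma key_prob {V : Type*} [Fintype V] [DecidableEq V] {ι : Type*} [DecidableEq ι]
    (U : Finset ι) (B : ι → Finset V)
    (hd : (U : Set ι).Pairwise (fun a b => Disjoint (B a) (B b))) :
    ∑ c : V → Bool, (∏ u ∈ U, (1 - ∏ v ∈ B u, (if c v then (1:ℝ) else 0))) *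
      ∏ v : V, (if c v then (1/4 : ℝ) else 3/4)
    = ∏ u ∈ U, (1 - (1/4:ℝ) ^ (B u).card) := by
  have expand : ∀ c : V → Bool,
      (∏ u ∈ U, (1 - ∏ v ∈ B u, (if c v then (1:ℝ) else 0)))
      = ∑ T ∈ U.powerset, (∏ u ∈ T, -(∏ v ∈ B u, (if c v then (1:ℝ) else 0))) := by
    intro c
    have := Finset.prod_add (fun u => -(∏ v ∈ B u, (if c v then (1:ℝ) else 0)))
      (fun _ : ι => (1:ℝ)) U
    simp only [Finset.prod_const_one, mul_one] at this
    rw [← this]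
    congr 1
    ext u
    ring
  simp_rw [expand, Finset.sum_mul]
  rw [Finset.sum_comm]
  have step : ∀ T ∈ U.powerset,
      (∑ c : V → Bool, (∏ u ∈ T, -(∏ v ∈ B u, (if c v then (1:ℝ) else 0))) *
        ∏ v : V, (if c v then (1/4 : ℝ) else 3/4))
      = ∏ u ∈ T, -((1/4:ℝ) ^ (B u).card) := by
    intro T hT
    rw [Finset.mem_powerset] at hT
    have hdT : ∀ a ∈ T, ∀ b ∈ T, a ≠ b → Disjoint (B a) (B b) := by
      intro a ha b hb hab
      exact hd (hT ha) (hT hb) hab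
    have h1 : ∀ c : V → Bool,
        (∏ u ∈ T, -(∏ v ∈ B u, (if c v then (1:ℝ) else 0)))
        = (-1:ℝ)^T.card * ∏ v ∈ T.biUnion B, (if c v then (1:ℝ) else 0) := by
      intro c
      rw [prod_neg'', Finset.prod_biUnion hdT]
    simp_rw [h1, mul_assoc, ← Finset.mul_sum, sum_weight_subset]
    rw [Finset.card_biUnion hdT, ← Finset.prod_pow_eq_pow_sum, prod_neg'']
  rw [Finset.sum_congr rfl step]
  have := Finset.prod_add (fun u => -((1/4:ℝ) ^ (B u).card)) (fun _ : ι => (1:ℝ)) U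
  simp only [Finset.prod_const_one, mul_one] at this
  rw [← this]
  exact Finset.prod_congr rfl (fun u _ => by ring)

lemma sum_weight_one {V : Type*} [Fintype V] [DecidableEq V] :
    ∑ c : V → Bool, ∏ v : V, (if c v then (1/4 : ℝ) else 3/4) = 1 := by
  have := sum_weight_subset (∅ : Finset V)
  simpa using this


open scoped Classical in
/-- For each `n`, let `U` be a set of `m n` vertices whose balls of radius `k' n`
are pairwise disjoint and of size at most `t n`, and color vertices independently
blue with probability `1/4`. If `m n · (1/4)^{t n} → ∞`, then the probability that
some `u ∈ U` has its entire ball colored blue tends to `1`; moreover whenever the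
whole ball of `u` is initially blue, `u` is still blue in generation `k' n` of the
majority dynamics. -/
theorem blue_ball_survives (V : ℕ → Type) [∀ n, Fintype (V n)]
    [∀ n, DecidableEq (V n)] (G : ∀ n, SimpleGraph (V n))
    [∀ n, DecidableRel (G n).Adj] (k' m t : ℕ → ℕ) (U : ∀ n, Finset (V n))
    (hm : ∀ n, (U n).card = m n)
    (hdisj : ∀ n, ((U n : Set (V n))).Pairwise
      (fun u w => Disjoint (gball (G n) u (k' n)) (gball (G n) w (k' n))))
    (hsize : ∀ n, ∀ u ∈ U n, (gball (G n) u (k' n)).ncard ≤ t n)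
    (hlim : Tendsto (fun n : ℕ => (m n : ℝ) * (1 / 4) ^ (t n)) atTop atTop) :
    Tendsto (fun n : ℕ =>
        ∑ c : V n → Bool,
          (if ∃ u ∈ U n, ∀ w ∈ gball (G n) u (k' n), c w = true then (1 : ℝ) else 0) *
            ∏ w : V n, (if c w then (1 / 4 : ℝ) else 3 / 4))
      atTop (nhds 1) ∧
    ∀ n, ∀ g : ℕ → V n → Bool, (∀ s, g (s + 1) = majStep (G n) (g s)) →
      ∀ u ∈ U n, (∀ w ∈ gball (G n) u (k' n), g 0 w = true) → g (k' n) u = true := by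
  constructor
  · -- probabilistic part
    set B : ∀ n, V n → Finset (V n) :=
      fun n u => (Set.toFinite (gball (G n) u (k' n))).toFinset with hB
    have hmemB : ∀ n u w, w ∈ B n u ↔ w ∈ gball (G n) u (k' n) := by
      intro n u w; exact Set.Finite.mem_toFinset _
    set Q : ℕ → ℝ := fun n => ∏ u ∈ U n, (1 - (1/4:ℝ) ^ (B n u).card) with hQdef
    -- identity: the sum equals 1 - Q n
    have hPQ : ∀ n, (∑ c : V n → Bool,
        (if ∃ u ∈ U n, ∀ w ∈ gball (G n) u (k' n), c w = true then (1 : ℝ) else 0) *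
          ∏ w : V n, (if c w then (1 / 4 : ℝ) else 3 / 4)) = 1 - Q n := by
      intro n
      have hind : ∀ c : V n → Bool,
          (if ∃ u ∈ U n, ∀ w ∈ gball (G n) u (k' n), c w = true then (1 : ℝ) else 0)
          = 1 - ∏ u ∈ U n, (1 - ∏ v ∈ B n u, (if c v then (1:ℝ) else 0)) := by
        intro c
        by_cases h : ∃ u ∈ U n, ∀ w ∈ gball (G n) u (k' n), c w = true
        · obtain ⟨u, hu, hall⟩ := h
          have hz : (1:ℝ) - ∏ v ∈ B n u, (if c v then (1:ℝ) else 0) = 0 := by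
            rw [Finset.prod_eq_one (fun v hv => by
              simp [hall v ((hmemB n u v).1 hv)])]
            ring
          rw [if_pos ⟨u, hu, hall⟩, Finset.prod_eq_zero hu hz]
          ring
        · rw [if_neg h]
          push_neg at h
          rw [Finset.prod_eq_one (fun u hu => ?_)]
          · ring
          obtain ⟨w, hw, hcw⟩ := h u hu
          rw [Finset.prod_eq_zero ((hmemB n u w).2 hw) (by simp [hcw])]
          ring
      calc (∑ c : V n → Bool,
          (if ∃ u ∈ U n, ∀ w ∈ gball (G n) u (k' n), c w = true then (1 : ℝ) else 0) *
            ∏ w : V n, (if c w then (1 / 4 : ℝ) else 3 / 4))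
          = ∑ c : V n → Bool,
            ((∏ w : V n, (if c w then (1 / 4 : ℝ) else 3 / 4)) -
              (∏ u ∈ U n, (1 - ∏ v ∈ B n u, (if c v then (1:ℝ) else 0))) *
                ∏ w : V n, (if c w then (1 / 4 : ℝ) else 3 / 4)) := by
            refine Finset.sum_congr rfl (fun c _ => ?_)
            rw [hind c]; ring
        _ = 1 - Q n := by
            rw [Finset.sum_sub_distrib, sum_weight_one,
              key_prob (U n) (B n) (fun a ha b hb hab =>
                Set.Finite.disjoint_toFinset.2 (hdisj n ha hb hab))]
    have hcard : ∀ n, ∀ u ∈ U n, (B n u).card ≤ t n := by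
      intro n u hu
      have := hsize n u hu
      rwa [Set.ncard_eq_toFinset_card _ (Set.toFinite _)] at this
    have hx1 : ∀ k : ℕ, (1/4:ℝ) ^ k ≤ 1 := fun k =>
      pow_le_one₀ (by norm_num) (by norm_num)
    have hQ0 : ∀ n, 0 ≤ Q n := fun n =>
      Finset.prod_nonneg (fun u _ => by linarith [hx1 (B n u).card])
    have hQle : ∀ n, Q n ≤ Real.exp (-((m n : ℝ) * (1/4)^(t n))) := by
      intro n
      have h1 : Q n ≤ (1 - (1/4:ℝ)^(t n)) ^ (m n) := by
        rw [← hm n, ← Finset.prod_const]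
        refine Finset.prod_le_prod (fun u _ => by linarith [hx1 (B n u).card])
          (fun u hu => ?_)
        have : (1/4:ℝ) ^ (t n) ≤ (1/4:ℝ) ^ (B n u).card :=
          pow_le_pow_of_le_one (by norm_num) (by norm_num) (hcard n u hu)
        linarith
      have h2 : (1 - (1/4:ℝ)^(t n)) ^ (m n) ≤ (Real.exp (-((1/4:ℝ)^(t n)))) ^ (m n) := by
        refine pow_le_pow_left₀ (by linarith [hx1 (t n)]) ?_ _
        have := Real.add_one_le_exp (-((1/4:ℝ)^(t n)))
        linarith
      have h3 : (Real.exp (-((1/4:ℝ)^(t n)))) ^ (m n)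
          = Real.exp (-((m n : ℝ) * (1/4)^(t n))) := by
        rw [← Real.exp_nat_mul]
        ring_nf
      linarith [h1, h2, h3.le, h3.ge]
    have hQtend : Tendsto Q atTop (nhds 0) := by
      refine squeeze_zero hQ0 hQle ?_
      have : Tendsto (fun n : ℕ => -((m n : ℝ) * (1/4)^(t n))) atTop atBot :=
        tendsto_neg_atTop_atBot.comp hlim
      exact Real.tendsto_exp_atBot.comp this
    have : Tendsto (fun n => 1 - Q n) atTop (nhds 1) := by
      simpa using tendsto_const_nhds.sub hQtend
    refine this.congr (fun n => (hPQ n).symm)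
  · intro n g hg u hu h0
    have := blue_persists (G n) u (k' n) g hg h0 (k' n) le_rfl u
    simp only [Nat.sub_self] at this
    exact this ⟨SimpleGraph.Walk.nil, by simp⟩
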